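/- Let n ≥ 3, let I be a finite nonempty set, and let G = Hₙ^{(I)} = {(g_i)_{i∈I} ∈ ∏_{i∈I} Hₙ : χ(g_i) = χ(g_j) for all i, j ∈ I} be the fiber product of copies of the hyperoctahedral group Hₙ over the total sign character χ. Let H ≤ G be a subgroup with H·M(G) = G and π_i(H) = Hₙ for all i ∈ I, where π_i is the projection to the i-th coordinate. Then H = G. -/

import Mathlib

open Equiv

open scoped Classical

noncomputable section

/-- The vector part `V = (𝔽₂)ⁿ` of the hyperoctahedral group (written
multiplicatively so that it can serve as the kernel of a semidirect product). -/
abbrev Vn (n : ℕ) : Type := Fin n → Multiplicative (ZMod 2)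

/-- The permutation action of `Sₙ` on `V = (𝔽₂)ⁿ` by permuting coordinates, as a
homomorphism `Sₙ →* Aut(V)`. -/
def permHom (n : ℕ) : Perm (Fin n) →* MulAut (Vn n) where
  toFun σ := MulEquiv.arrowCongr σ (MulEquiv.refl (Multiplicative (ZMod 2)))
  map_one' := by
    ext x i
    rfl
  map_mul' σ τ := by
    ext x i
    rfl

/-- The hyperoctahedral group `Hₙ = V ⋊ Sₙ`, `V = (𝔽₂)ⁿ`, with `Sₙ` permuting
coordinates; elements are written `⟨x, τ⟩` with `x ∈ V`, `τ ∈ Sₙ`. -/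
abbrev Hyp (n : ℕ) : Type := SemidirectProduct (Vn n) (Perm (Fin n)) (permHom n)

/-- The total sign `χ : Hₙ → {±1}`, `χ(x,τ) = (−1)^{x₁+⋯+xₙ}`, realized as a
homomorphism to `Multiplicative (ZMod 2) ≅ {±1}`. -/
def tsign (n : ℕ) : Hyp n →* Multiplicative (ZMod 2) where
  toFun g := Multiplicative.ofAdd (∑ i, Multiplicative.toAdd (g.left i))
  map_one' := by
    simp
  map_mul' g h := by
    simp only [SemidirectProduct.mul_left]
    rw [← ofAdd_add]
    congr 1
    have : ∑ i, Multiplicative.toAdd ((permHom n g.right h.left) i) =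
        ∑ i, Multiplicative.toAdd (h.left i) := by
      first
        | exact Equiv.sum_comp (g.right.symm) (fun i => Multiplicative.toAdd (h.left i))
        | simpa [permHom, MulEquiv.arrowCongr] using Equiv.sum_comp (g.right.symm)
            (fun i => Multiplicative.toAdd (h.left i))
    simp [Pi.mul_apply, Finset.sum_add_distrib, this]

/-- The subgroup `V_{n−1} ⋊ Sₙ = ker χ` of `Hₙ` (sum of signs zero). -/
def kerSign (n : ℕ) : Subgroup (Hyp n) := (tsign n).ker

/-- The subgroup `V_{n−1} ⋊ Aₙ` of `Hₙ`: total sign `0` and even permutation part. -/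
def Kn (n : ℕ) : Subgroup (Hyp n) :=
  (tsign n).ker ⊓ (alternatingGroup (Fin n)).comap SemidirectProduct.rightHom

/-- A maximal normal subgroup: a proper normal subgroup maximal among proper normal
subgroups. -/
def IsMaximalNormal {G : Type*} [Group G] (N : Subgroup G) : Prop :=
  N.Normal ∧ N ≠ ⊤ ∧ ∀ N' : Subgroup G, N'.Normal → N < N' → N' = ⊤

/-- The Melnikov subgroup `M(G)`: the intersection of all maximal normal subgroups of
`G` (equal to `G` itself when there are none, i.e. when `G` is trivial). -/
def melnikov (G : Type*) [Group G] : Subgroup G :=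
  sInf {N : Subgroup G | IsMaximalNormal N}

/-- The fiber product `Hₙ^{(I)} = {(g_i) ∈ ∏_I Hₙ : χ(g_i) = χ(g_j) for all i,j}`
of copies of the hyperoctahedral group over the total sign character. -/
def fiberProd (n : ℕ) (I : Type*) : Subgroup (I → Hyp n) where
  carrier := {g | ∀ i j, tsign n (g i) = tsign n (g j)}
  one_mem' := by intro i j; simp
  mul_mem' := by
    intro a b ha hb i j
    simp only [Pi.mul_apply, map_mul, ha i j, hb i j]
  inv_mem' := by
    intro a ha i j
    simp only [Pi.inv_apply, map_inv, ha i j]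

end

section Gen
variable {G G₂ : Type*} [Group G] [Group G₂]

lemma melnikov_normal : (melnikov G).Normal := by
  constructor
  intro x hx g
  rw [melnikov, Subgroup.mem_sInf] at hx ⊢
  intro N hN
  exact hN.1.conj_mem x (hx N hN) g

lemma melnikov_le {N : Subgroup G} (h : IsMaximalNormal N) : melnikov G ≤ N :=
  sInf_le h

lemma isMaximalNormal_comap {f : G →* G₂} (hf : Function.Surjective f)
    {N : Subgroup G₂} (hN : IsMaximalNormal N) : IsMaximalNormal (N.comap f) := by
  obtain ⟨hN1, hN2, hN3⟩ := hN
  refine ⟨Subgroup.Normal.comap hN1 f, ?_, ?_⟩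
  · intro h
    apply hN2
    rw [eq_top_iff]
    intro x _
    obtain ⟨y, rfl⟩ := hf x
    have : y ∈ N.comap f := h ▸ Subgroup.mem_top y
    exact this
  · intro N' hN' hlt
    have hker : f.ker ≤ N.comap f := by
      intro x hx
      simp only [Subgroup.mem_comap, MonoidHom.mem_ker.mp hx]
      exact N.one_mem
    have hker' : f.ker ≤ N' := le_trans hker hlt.le
    have hmap : (N'.map f).Normal := hN'.map f hf
    have hcm : (N'.map f).comap f = N' := Subgroup.comap_map_eq_self hker'
    have hlt2 : N < N'.map f := by
      have h1 : N ≤ N'.map f := by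
        rw [← Subgroup.map_comap_eq_self_of_surjective hf N]
        exact Subgroup.map_mono hlt.le
      rcases lt_or_eq_of_le h1 with h | h
      · exact h
      · exfalso
        have : N.comap f = N' := by rw [h, hcm]
        exact absurd this (ne_of_lt hlt)
    have := hN3 _ hmap hlt2
    rw [← hcm, this, Subgroup.comap_top]

lemma map_melnikov_le {f : G →* G₂} (hf : Function.Surjective f) :
    (melnikov G).map f ≤ melnikov G₂ := by
  rw [melnikov]
  apply le_sInf
  intro N hN
  calc (melnikov G).map f ≤ ((N.comap f)).map f :=
        Subgroup.map_mono (melnikov_le (isMaximalNormal_comap hf hN))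
    _ ≤ N := Subgroup.map_comap_le f N

lemma exists_isMaximalNormal_ge [Finite G] {A : Subgroup G} (hA : A.Normal) (hAtop : A ≠ ⊤) :
    ∃ T : Subgroup G, IsMaximalNormal T ∧ A ≤ T := by
  have hfin : {T : Subgroup G | T.Normal ∧ T ≠ ⊤ ∧ A ≤ T}.Finite := Set.toFinite _
  obtain ⟨T, hT, hmax⟩ := Set.Finite.exists_maximalFor id _ hfin ⟨A, hA, hAtop, le_refl A⟩
  refine ⟨T, ⟨hT.1, hT.2.1, ?_⟩, hT.2.2⟩
  intro N' hN' hlt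
  by_contra htop
  have := hmax (j := N') ⟨hN', htop, le_trans hT.2.2 hlt.le⟩ hlt.le
  exact absurd this hlt.not_ge

lemma isMaximalNormal_bot_quotient {T : Subgroup G} (hT : IsMaximalNormal T) :
    haveI : T.Normal := hT.1
    IsMaximalNormal (⊥ : Subgroup (G ⧸ T)) := by
  haveI : T.Normal := hT.1
  refine ⟨inferInstance, ?_, ?_⟩
  · intro h
    obtain ⟨g, hg⟩ : ∃ g, g ∉ T := by
      by_contra hc
      push_neg at hc
      exact hT.2.1 (eq_top_iff.mpr fun x _ => hc x)
    have : (g : G ⧸ T) ∈ (⊥ : Subgroup (G ⧸ T)) := h ▸ Subgroup.mem_top _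
    rw [Subgroup.mem_bot] at this
    exact hg ((QuotientGroup.eq_one_iff g).mp this)
  · intro N' hN' hlt
    have hsurj : Function.Surjective (QuotientGroup.mk' T) := QuotientGroup.mk'_surjective T
    have hcomap : (N'.comap (QuotientGroup.mk' T)).Normal := hN'.comap _
    have hle : T ≤ N'.comap (QuotientGroup.mk' T) := by
      intro t ht
      simp only [Subgroup.mem_comap]
      have : (QuotientGroup.mk' T) t = 1 := (QuotientGroup.eq_one_iff t).mpr ht
      rw [this]; exact N'.one_mem
    have hTlt : T < N'.comap (QuotientGroup.mk' T) := by
      rcases lt_or_eq_of_le hle with h | h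
      · exact h
      · exfalso
        have : N' = ⊥ := by
          rw [eq_bot_iff]
          intro x hx
          obtain ⟨g, rfl⟩ := hsurj x
          have : g ∈ N'.comap (QuotientGroup.mk' T) := hx
          rw [← h] at this
          rw [Subgroup.mem_bot]
          exact (QuotientGroup.eq_one_iff g).mpr this
        rw [this] at hlt
        exact lt_irrefl _ hlt
    have := hT.2.2 _ hcomap hTlt
    rw [eq_top_iff]
    intro x _
    obtain ⟨g, rfl⟩ := hsurj x
    have : g ∈ N'.comap (QuotientGroup.mk' T) := this ▸ Subgroup.mem_top g
    exact this

lemma isMaximalNormal_ker {G₃ : Type*} [Group G₃]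
    {T : Subgroup G₃} [T.Normal] (hT : IsMaximalNormal T)
    (F : G →* G₃ ⧸ T) (hF : Function.Surjective F) :
    IsMaximalNormal F.ker := by
  have := isMaximalNormal_comap hF (isMaximalNormal_bot_quotient hT)
  rwa [MonoidHom.comap_bot] at this

end Gen

noncomputable section HypAux

open Multiplicative SemidirectProduct

variable {n : ℕ}

lemma sq_eq_one_mzm2 : ∀ a : Multiplicative (ZMod 2), a ^ 2 = 1 := by decide

lemma cases_mzm2 : ∀ a : Multiplicative (ZMod 2), a = 1 ∨ a = ofAdd 1 := by decide

lemma permHom_apply (σ : Perm (Fin n)) (x : Vn n) (m : Fin n) :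
    permHom n σ x m = x (σ.symm m) := rfl

/-- The delta vector. -/
def dd (n : ℕ) (i : Fin n) : Vn n := fun m => if m = i then Multiplicative.ofAdd 1 else 1

lemma permHom_dd (σ : Perm (Fin n)) (i : Fin n) : permHom n σ (dd n i) = dd n (σ i) := by
  funext m
  rw [permHom_apply]
  simp only [dd]
  by_cases h : m = σ i
  · rw [if_pos (by rw [h]; simp), if_pos h]
  · rw [if_neg, if_neg h]
    intro hc
    exact h (by rw [← hc]; simp)

lemma tsign_mk (v : Vn n) (σ : Perm (Fin n)) :
    tsign n ⟨v, σ⟩ = Multiplicative.ofAdd (∑ i, Multiplicative.toAdd (v i)) := rfl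

lemma tsign_eq (g : Hyp n) :
    tsign n g = Multiplicative.ofAdd (∑ i, Multiplicative.toAdd (g.left i)) := rfl

lemma mem_kerSign {g : Hyp n} : g ∈ kerSign n ↔ (∑ i, Multiplicative.toAdd (g.left i)) = 0 := by
  rw [kerSign, MonoidHom.mem_ker, tsign_eq]
  exact ⟨fun h => by simpa using congrArg Multiplicative.toAdd h, fun h => by rw [h]; rfl⟩

lemma conj_comm_mem {N : Subgroup (Hyp n)} (hN : N.Normal) {σ : Perm (Fin n)} {w : Vn n}
    (hw : (⟨w, σ⟩ : Hyp n) ∈ N) (x : Vn n) :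
    (inl (x * (permHom n σ x)⁻¹) : Hyp n) ∈ N := by
  have h1 : (inl x : Hyp n) * ⟨w, σ⟩ * (inl x)⁻¹ ∈ N := hN.conj_mem _ hw _
  have h2 := N.mul_mem h1 (N.inv_mem hw)
  have key : (inl x : Hyp n) * ⟨w, σ⟩ * (inl x)⁻¹ * (⟨w, σ⟩ : Hyp n)⁻¹
      = inl (x * (permHom n σ x)⁻¹) := by
    apply SemidirectProduct.ext
    · simp only [SemidirectProduct.mul_left, SemidirectProduct.inv_left,
        SemidirectProduct.left_inl, SemidirectProduct.right_inl, SemidirectProduct.mul_right,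
        SemidirectProduct.inv_right, map_one, map_inv, map_mul, MulAut.one_apply]
      simp only [inv_one, mul_one, one_mul, MulAut.one_apply, MulAut.apply_inv_self]
      rw [mul_right_comm x w, mul_inv_cancel_right]
    · simp only [SemidirectProduct.mul_right, SemidirectProduct.inv_right,
        SemidirectProduct.right_inl]
      simp
  rw [key] at h2
  exact h2

end HypAux

noncomputable section HypAux2

open Multiplicative SemidirectProduct

variable {n : ℕ}

lemma exists_left_mem {N : Subgroup (Hyp n)} (hP : N.map (rightHom) = ⊤)
    (σ : Perm (Fin n)) : ∃ w : Vn n, (⟨w, σ⟩ : Hyp n) ∈ N := by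
  have : σ ∈ N.map (rightHom : Hyp n →* Perm (Fin n)) := hP ▸ Subgroup.mem_top σ
  obtain ⟨g, hg, hgr⟩ := this
  refine ⟨g.left, ?_⟩
  have : g = ⟨g.left, σ⟩ := by
    apply SemidirectProduct.ext
    · rfl
    · exact hgr
  rwa [← this]

lemma inl_mem_of_sum_zero (hn3 : 3 ≤ n) {N : Subgroup (Hyp n)} (hN : N.Normal)
    (hP : N.map rightHom = ⊤) {u : Vn n}
    (hu : (∑ i, Multiplicative.toAdd (u i)) = 0) : (inl u : Hyp n) ∈ N := by
  have hn0 : 0 < n := by omega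
  set i0 : Fin n := ⟨0, hn0⟩ with hi0
  -- generators
  have hdd : ∀ i : Fin n, (inl (dd n i * (dd n i0)⁻¹) : Hyp n) ∈ N := by
    intro i
    by_cases h : i = i0
    · subst h
      simp only [mul_inv_cancel]
      rw [map_one]
      exact N.one_mem
    · obtain ⟨w, hw⟩ := exists_left_mem hP (Equiv.swap i i0)
      have := conj_comm_mem hN hw (dd n i)
      rwa [permHom_dd, Equiv.swap_apply_left] at this
  -- decomposition
  set e : Fin n → ℕ := fun i => (Multiplicative.toAdd (u i)).val with he
  have hvcast : ∀ i, ((e i : ℕ) : ZMod 2) = Multiplicative.toAdd (u i) := by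
    intro i
    exact ZMod.natCast_rightInverse _
  have hu2 : u = (∏ i, (dd n i * (dd n i0)⁻¹) ^ (e i)) * (dd n i0) ^ (∑ i, e i) := by
    funext m
    rw [Pi.mul_apply, Pi.pow_apply, Finset.prod_apply]
    have hfac : ∀ i : Fin n, ((dd n i * (dd n i0)⁻¹) ^ (e i)) m
        = (dd n i m) ^ (e i) * ((dd n i0 m)⁻¹) ^ (e i) := by
      intro i
      rw [Pi.pow_apply, Pi.mul_apply, Pi.inv_apply, mul_pow]
    rw [Finset.prod_congr rfl (fun i _ => hfac i), Finset.prod_mul_distrib,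
      Finset.prod_pow_eq_pow_sum]
    have h1 : ∏ i, (dd n i m) ^ (e i) = u m := by
      rw [Finset.prod_eq_single m]
      · have hddmm : dd n m m = Multiplicative.ofAdd (1 : ZMod 2) := by simp [dd]
        rw [hddmm]
        have h2 : (Multiplicative.ofAdd (1 : ZMod 2)) ^ (e m) =
            Multiplicative.ofAdd ((e m : ℕ) • (1 : ZMod 2)) := by
          rw [ofAdd_nsmul]
        rw [h2, nsmul_eq_mul, mul_one, hvcast m]
        simp
      · intro i _ hi
        simp only [dd, if_neg (Ne.symm hi), one_pow]
      · intro h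
        exact absurd (Finset.mem_univ m) h
    rw [h1]
    rw [mul_assoc, ← mul_pow, inv_mul_cancel, one_pow, mul_one]
  have heven : (2 : ℕ) ∣ ∑ i, e i := by
    have hz : ((∑ i, e i : ℕ) : ZMod 2) = 0 := by
      push_cast
      rw [Finset.sum_congr rfl (fun i _ => hvcast i)]
      exact hu
    exact (ZMod.natCast_eq_zero_iff _ 2).mp hz
  obtain ⟨k, hk⟩ := heven
  have hpow : (dd n i0) ^ (∑ i, e i) = 1 := by
    rw [hk, pow_mul]
    have : (dd n i0) ^ 2 = 1 := by
      funext m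
      rw [Pi.pow_apply]
      exact sq_eq_one_mzm2 _
    rw [this, one_pow]
  have hVmem : u ∈ N.comap (inl : Vn n →* Hyp n) := by
    rw [hu2, hpow, mul_one]
    exact Subgroup.prod_mem _ (fun i _ => Subgroup.pow_mem _ (Subgroup.mem_comap.mpr (hdd i)) _)
  exact Subgroup.mem_comap.mp hVmem

lemma kerSign_le_of_map_right_eq_top (hn3 : 3 ≤ n) {N : Subgroup (Hyp n)} (hN : N.Normal)
    (hNle : N ≤ kerSign n) (hP : N.map rightHom = ⊤) : kerSign n ≤ N := by
  intro g hg
  obtain ⟨w, hw⟩ := exists_left_mem hP g.right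
  have hwsum : (∑ i, Multiplicative.toAdd (w i)) = 0 := by
    have := hNle hw
    rw [mem_kerSign] at this
    exact this
  have hgsum : (∑ i, Multiplicative.toAdd (g.left i)) = 0 := mem_kerSign.mp hg
  have hrep : g = inl (g.left * w⁻¹) * ⟨w, g.right⟩ := by
    apply SemidirectProduct.ext
    · simp only [SemidirectProduct.mul_left, SemidirectProduct.left_inl,
        SemidirectProduct.right_inl, map_one, MulAut.one_apply]
      simp
    · simp only [SemidirectProduct.mul_right, SemidirectProduct.right_inl, one_mul]
  rw [hrep]
  refine N.mul_mem (inl_mem_of_sum_zero hn3 hN hP ?_) hw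
  simp only [Pi.mul_apply, Pi.inv_apply, toAdd_mul, toAdd_inv]
  rw [Finset.sum_add_distrib, hgsum, zero_add, Finset.sum_neg_distrib, hwsum, neg_zero]

lemma exists_sep_maxNormal (hn3 : 3 ≤ n) {N : Subgroup (Hyp n)} (hN : N.Normal)
    (hNle : N ≤ kerSign n) (hnot : ¬ kerSign n ≤ N) :
    ∃ T : Subgroup (Hyp n), IsMaximalNormal T ∧ N ≤ T ∧ ∃ k ∈ kerSign n, k ∉ T := by
  by_cases hP : N.map (rightHom : Hyp n →* Perm (Fin n)) = ⊤
  · exact absurd (kerSign_le_of_map_right_eq_top hn3 hN hNle hP) hnot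
  · have hPn : (N.map (rightHom : Hyp n →* Perm (Fin n))).Normal :=
      hN.map _ SemidirectProduct.rightHom_surjective
    obtain ⟨Pt, hPt, hPle⟩ := exists_isMaximalNormal_ge hPn hP
    refine ⟨Pt.comap (rightHom : Hyp n →* Perm (Fin n)),
      isMaximalNormal_comap SemidirectProduct.rightHom_surjective hPt, ?_, ?_⟩
    · intro g hg
      exact hPle (Subgroup.mem_map.mpr ⟨g, hg, rfl⟩)
    · obtain ⟨σ, hσ⟩ : ∃ σ : Perm (Fin n), σ ∉ Pt := by
        by_contra hc
        push_neg at hc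
        exact hPt.2.1 (eq_top_iff.mpr fun x _ => hc x)
      refine ⟨⟨1, σ⟩, ?_, ?_⟩
      · rw [mem_kerSign]
        simp
      · simpa [Subgroup.mem_comap] using hσ

end HypAux2

noncomputable section MainAux

open Multiplicative SemidirectProduct Pointwise

instance hypFinite {n : ℕ} : Finite (Hyp n) :=
  Finite.of_injective (fun g => (g.left, g.right))
    (fun _ _ h => SemidirectProduct.ext (congrArg Prod.fst h) (congrArg Prod.snd h))

lemma mem_fiberProd {n : ℕ} {I : Type*} {g : I → Hyp n} :
    g ∈ fiberProd n I ↔ ∀ i j, tsign n (g i) = tsign n (g j) := Iff.rfl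

/-- An element of `Hₙ` with prescribed total sign. -/
def sgnElt (n : ℕ) (hn : 0 < n) (s : Multiplicative (ZMod 2)) : Hyp n :=
  if s = 1 then 1 else ⟨dd n ⟨0, hn⟩, 1⟩

lemma tsign_sgnElt (n : ℕ) (hn : 0 < n) (s : Multiplicative (ZMod 2)) :
    tsign n (sgnElt n hn s) = s := by
  rcases cases_mzm2 s with h | h <;> subst h
  · rw [sgnElt, if_pos rfl, map_one]
  · rw [sgnElt, if_neg (by decide), tsign_mk]
    congr 1
    have key : ∀ i, Multiplicative.toAdd (dd n ⟨0, hn⟩ i)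
        = if i = ⟨0, hn⟩ then (1 : ZMod 2) else 0 := by
      intro i
      simp [dd, apply_ite Multiplicative.toAdd]
    rw [Finset.sum_congr rfl fun i _ => key i]
    simp

universe u

lemma auxMain (n : ℕ) (hn : 3 ≤ n) : ∀ (m : ℕ) (I : Type u), Finite I → Nonempty I →
    Nat.card I ≤ m → ∀ (H : Subgroup ↥(fiberProd n I)),
    (H ⊔ melnikov ↥(fiberProd n I) = ⊤) →
    (∀ i : I, H.map ((Pi.evalMonoidHom (fun _ : I => Hyp n) i).comp (fiberProd n I).subtype) = ⊤) →
    H = ⊤ := by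
  intro m
  induction m with
  | zero =>
    intro I hF hN hc H h1 h2
    exfalso
    haveI := hF; haveI := hN
    have := Nat.card_pos (α := I)
    omega
  | succ m ih =>
    intro I hF hN hc H h1 h2
    haveI := hF; haveI := hN
    have hn0 : 0 < n := by omega
    by_cases hone : Nat.card I = 1
    · -- base case : a single coordinate
      obtain ⟨hsub, -⟩ := Nat.card_eq_one_iff_unique.mp hone
      have i₀ : I := Classical.arbitrary I
      rw [eq_top_iff]
      intro g _
      have hg : ((Pi.evalMonoidHom (fun _ : I => Hyp n) i₀).comp (fiberProd n I).subtype) g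
          ∈ H.map ((Pi.evalMonoidHom (fun _ : I => Hyp n) i₀).comp (fiberProd n I).subtype) := by
        rw [h2 i₀]
        trivial
      obtain ⟨h, hh, hhg⟩ := Subgroup.mem_map.mp hg
      have heq : h = g := by
        apply Subtype.ext
        funext i
        have hi : i = i₀ := Subsingleton.elim i i₀
        subst hi
        exact hhg
      rwa [← heq]
    · -- inductive step
      have h2le : 2 ≤ Nat.card I := by
        have := Nat.card_pos (α := I); omega
      haveI : Nontrivial I := Finite.one_lt_card_iff_nontrivial.mp (by omega)
      have i₀ : I := Classical.arbitrary I
      obtain ⟨j₀, hj₀⟩ := exists_ne i₀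
      haveI hne' : Nonempty {j : I // j ≠ i₀} := ⟨⟨j₀, hj₀⟩⟩
      have hcard' : Nat.card {j : I // j ≠ i₀} ≤ m := by
        haveI := Fintype.ofFinite I
        have e1 : Nat.card {j : I // j ≠ i₀} = Fintype.card {j : I // j ≠ i₀} :=
          Nat.card_eq_fintype_card
        have e2 : Fintype.card {j : I // j ≠ i₀} < Fintype.card I := by
          apply Fintype.card_subtype_lt (x := i₀)
          simp
        have e3 : Nat.card I = Fintype.card I := Nat.card_eq_fintype_card
        omega
      -- the restriction homomorphism
      set P : ↥(fiberProd n I) →* ↥(fiberProd n {j : I // j ≠ i₀}) :=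
        { toFun := fun g => ⟨fun j => g.1 j.1,
            mem_fiberProd.mpr fun a b => mem_fiberProd.mp g.2 a.1 b.1⟩
          map_one' := Subtype.ext (funext fun _ => rfl)
          map_mul' := fun _ _ => Subtype.ext (funext fun _ => rfl) } with hPdef
      have hPsurj : Function.Surjective P := by
        intro g'
        refine ⟨⟨fun i => if h : i = i₀ then g'.1 ⟨j₀, hj₀⟩ else g'.1 ⟨i, h⟩, ?_⟩, ?_⟩
        · rw [mem_fiberProd]
          have key : ∀ i : I, ∃ a : {j : I // j ≠ i₀},
              (if h : i = i₀ then g'.1 ⟨j₀, hj₀⟩ else g'.1 ⟨i, h⟩) = g'.1 a := by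
            intro i
            by_cases h : i = i₀
            · exact ⟨⟨j₀, hj₀⟩, by rw [dif_pos h]⟩
            · exact ⟨⟨i, h⟩, by rw [dif_neg h]⟩
          intro a b
          obtain ⟨xa, hxa⟩ := key a
          obtain ⟨xb, hxb⟩ := key b
          rw [hxa, hxb]
          exact mem_fiberProd.mp g'.2 xa xb
        · apply Subtype.ext
          funext j
          show (if h : (j : I) = i₀ then g'.1 ⟨j₀, hj₀⟩ else g'.1 ⟨j.1, h⟩) = g'.1 j
          rw [dif_neg j.2]
      set πG : ↥(fiberProd n I) →* Hyp n :=
        (Pi.evalMonoidHom (fun _ : I => Hyp n) i₀).comp (fiberProd n I).subtype with hπGdef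
      have h2i : H.map πG = ⊤ := h2 i₀
      have hπGsurj : Function.Surjective πG := by
        intro a
        refine ⟨⟨fun i => if i = i₀ then a else sgnElt n hn0 (tsign n a), ?_⟩, ?_⟩
        · rw [mem_fiberProd]
          have key : ∀ i, tsign n (if i = i₀ then a else sgnElt n hn0 (tsign n a))
              = tsign n a := by
            intro i
            by_cases h : i = i₀
            · rw [if_pos h]
            · rw [if_neg h, tsign_sgnElt]
          intro i j
          rw [key i, key j]
        · show (if i₀ = i₀ then a else sgnElt n hn0 (tsign n a)) = a
          rw [if_pos rfl]
      -- kernel of P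
      have hkerP : ∀ g : ↥(fiberProd n I), g ∈ P.ker ↔ ∀ j : I, j ≠ i₀ → g.1 j = 1 := by
        intro g
        rw [MonoidHom.mem_ker]
        constructor
        · intro h j hj
          exact congrFun (congrArg Subtype.val h) ⟨j, hj⟩
        · intro h
          apply Subtype.ext
          funext j
          exact h j.1 j.2
      have hkerPeq : ∀ g u : ↥(fiberProd n I), g ∈ P.ker → u ∈ P.ker → πG g = πG u → g = u := by
        intro g u hg hu he
        apply Subtype.ext
        funext i
        by_cases h : i = i₀
        · subst h; exact he
        · rw [(hkerP g).mp hg i h, (hkerP u).mp hu i h]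
      have hι : ∀ k : Hyp n, tsign n k = 1 →
          ∃ g : ↥(fiberProd n I), g ∈ P.ker ∧ πG g = k := by
        intro k hk
        refine ⟨⟨fun i => if i = i₀ then k else 1, ?_⟩, ?_, ?_⟩
        · rw [mem_fiberProd]
          have key : ∀ i, tsign n (if i = i₀ then k else 1) = 1 := by
            intro i
            by_cases h : i = i₀
            · rw [if_pos h]; exact hk
            · rw [if_neg h, map_one]
          intro i j
          rw [key i, key j]
        · rw [hkerP]
          intro j hj
          show (if j = i₀ then k else 1) = 1
          rw [if_neg hj]
        · show (if i₀ = i₀ then k else 1) = k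
          rw [if_pos rfl]
      -- the coordinate subgroup
      set NN : Subgroup (Hyp n) := (H ⊓ P.ker).map πG with hNNdef
      have hNNnormal : NN.Normal := by
        constructor
        intro x hx a
        obtain ⟨g, hg, rfl⟩ := Subgroup.mem_map.mp hx
        obtain ⟨h, hh, hha⟩ := Subgroup.mem_map.mp (show a ∈ H.map πG by rw [h2i]; trivial)
        refine Subgroup.mem_map.mpr ⟨h * g * h⁻¹,
          ⟨H.mul_mem (H.mul_mem hh hg.1) (H.inv_mem hh),
            (MonoidHom.normal_ker P).conj_mem g hg.2 h⟩, ?_⟩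
        rw [map_mul, map_mul, map_inv, hha]
      have hNNle : NN ≤ kerSign n := by
        intro x hx
        obtain ⟨g, hg, rfl⟩ := Subgroup.mem_map.mp hx
        have h0 : tsign n (g.1 i₀) = tsign n (g.1 j₀) := mem_fiberProd.mp g.2 i₀ j₀
        rw [(hkerP g).mp hg.2 j₀ hj₀, map_one] at h0
        exact MonoidHom.mem_ker.mpr h0
      -- the projection of H away from i₀ is everything, by induction
      have hmapHP : H.map P = ⊤ := by
        apply ih _ inferInstance hne' hcard'
        · have hm : (H.map P) ⊔ (melnikov ↥(fiberProd n I)).map P = ⊤ := by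
            rw [← Subgroup.map_sup, h1]
            exact Subgroup.map_top_of_surjective P hPsurj
          rw [eq_top_iff, ← hm]
          exact sup_le_sup le_rfl (map_melnikov_le hPsurj)
        · intro j
          rw [Subgroup.map_map]
          have hcomp : ((Pi.evalMonoidHom (fun _ : {j : I // j ≠ i₀} => Hyp n) j).comp
              (fiberProd n {j : I // j ≠ i₀}).subtype).comp P
              = (Pi.evalMonoidHom (fun _ : I => Hyp n) j.1).comp (fiberProd n I).subtype :=
            MonoidHom.ext fun g => rfl
          rw [hcomp]
          exact h2 j.1
      by_cases hks : kerSign n ≤ NN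
      · -- conclude H = ⊤
        have hkerPH : P.ker ≤ H := by
          intro g hg
          have hsign : tsign n (πG g) = 1 := by
            have h0 : tsign n (g.1 i₀) = tsign n (g.1 j₀) := mem_fiberProd.mp g.2 i₀ j₀
            rw [(hkerP g).mp hg j₀ hj₀, map_one] at h0
            exact h0
          obtain ⟨u, hu, hue⟩ := Subgroup.mem_map.mp (hks (MonoidHom.mem_ker.mpr hsign))
          have heq : u = g := hkerPeq u g hu.2 hg hue
          rw [← heq]
          exact hu.1
        rw [eq_top_iff]
        intro g _
        obtain ⟨h, hh, hhe⟩ := Subgroup.mem_map.mp (show P g ∈ H.map P by rw [hmapHP]; trivial)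
        have hker : h⁻¹ * g ∈ P.ker := by
          rw [MonoidHom.mem_ker, map_mul, map_inv, hhe, inv_mul_cancel]
        have := H.mul_mem hh (hkerPH hker)
        rwa [mul_inv_cancel_left] at this
      · -- derive a contradiction using the Melnikov hypothesis
        exfalso
        obtain ⟨T, hT, hNT, k, hk1, hk2⟩ := exists_sep_maxNormal hn hNNnormal hNNle hks
        haveI : T.Normal := hT.1
        have hC2 : IsMaximalNormal (T.comap πG) := isMaximalNormal_comap hπGsurj hT
        set φ : ↥H →* (↥(fiberProd n I) ⧸ P.ker) :=
          (QuotientGroup.mk' P.ker).comp H.subtype with hφdef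
        have hφsurj : Function.Surjective φ := by
          intro q
          obtain ⟨g, rfl⟩ := QuotientGroup.mk'_surjective P.ker q
          obtain ⟨h, hh, hhe⟩ := Subgroup.mem_map.mp (show P g ∈ H.map P by rw [hmapHP]; trivial)
          refine ⟨⟨h, hh⟩, ?_⟩
          show QuotientGroup.mk' P.ker h = QuotientGroup.mk' P.ker g
          rw [QuotientGroup.mk'_eq_mk']
          refine ⟨h⁻¹ * g, ?_, by group⟩
          rw [MonoidHom.mem_ker, map_mul, map_inv, hhe, inv_mul_cancel]
        set s : ↥H →* ((Hyp n) ⧸ T) := (QuotientGroup.mk' T).comp (πG.comp H.subtype) with hsdef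
        have hkers : φ.ker ≤ s.ker := by
          intro h hh
          have h1k : (h : ↥(fiberProd n I)) ∈ P.ker := by
            have : φ h = 1 := hh
            exact (QuotientGroup.eq_one_iff _).mp this
          have hmem : πG ↑h ∈ NN := Subgroup.mem_map.mpr ⟨↑h, ⟨h.2, h1k⟩, rfl⟩
          show s h = 1
          exact (QuotientGroup.eq_one_iff _).mpr (hNT hmem)
        set F : ↥(fiberProd n I) →* ((Hyp n) ⧸ T) :=
          (φ.liftOfRightInverse (Function.surjInv hφsurj)
            (Function.rightInverse_surjInv hφsurj) ⟨s, hkers⟩).comp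
            (QuotientGroup.mk' P.ker) with hFdef
        have hFh : ∀ h : ↥H, F ↑h = s h := by
          intro h
          exact φ.liftOfRightInverse_comp_apply (Function.surjInv hφsurj)
            (Function.rightInverse_surjInv hφsurj) ⟨s, hkers⟩ h
        have hFsurj : Function.Surjective F := by
          intro y
          obtain ⟨a, rfl⟩ := QuotientGroup.mk'_surjective T y
          obtain ⟨h, hh, hhe⟩ := Subgroup.mem_map.mp (show a ∈ H.map πG by rw [h2i]; trivial)
          refine ⟨↑(⟨h, hh⟩ : ↥H), ?_⟩
          rw [hFh]
          show QuotientGroup.mk' T (πG h) = QuotientGroup.mk' T a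
          rw [hhe]
        have hC1 : IsMaximalNormal F.ker := isMaximalNormal_ker hT F hFsurj
        obtain ⟨g0, hg0K, hg0π⟩ := hι k hk1
        haveI : (melnikov ↥(fiberProd n I)).Normal := melnikov_normal
        have hg0sup : g0 ∈ H ⊔ melnikov ↥(fiberProd n I) := by rw [h1]; trivial
        have hmem : g0 ∈ ((H : Set ↥(fiberProd n I))
            * (melnikov ↥(fiberProd n I) : Set ↥(fiberProd n I))) := by
          rw [← Subgroup.mul_normal]
          exact hg0sup
        obtain ⟨h, hh, mm, hmm, hprod0⟩ := hmem
        have hprod : h * mm = g0 := hprod0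
        have hFg0 : F g0 = 1 := by
          show (φ.liftOfRightInverse (Function.surjInv hφsurj)
            (Function.rightInverse_surjInv hφsurj) ⟨s, hkers⟩) (QuotientGroup.mk' P.ker g0) = 1
          have : QuotientGroup.mk' P.ker g0 = 1 := (QuotientGroup.eq_one_iff _).mpr hg0K
          rw [this, map_one]
        have hFm : F mm = 1 := MonoidHom.mem_ker.mp (melnikov_le hC1 hmm)
        have hFh1 : F h = 1 := by
          have hmul : F h * F mm = F g0 := by rw [← map_mul, hprod]
          rw [hFm, mul_one, hFg0] at hmul
          exact hmul
        have hπT : πG h ∈ T := by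
          have hsh : s ⟨h, hh⟩ = 1 := by
            rw [← hFh ⟨h, hh⟩]
            exact hFh1
          exact (QuotientGroup.eq_one_iff _).mp hsh
        have hmmT : πG mm ∈ T := Subgroup.mem_comap.mp (melnikov_le hC2 hmm)
        have hg0T : πG g0 ∈ T := by
          rw [← hprod, map_mul]
          exact T.mul_mem hπT hmmT
        rw [hg0π] at hg0T
        exact hk2 hg0T

end MainAux


/-- **Proposition (filling the fiber product of hyperoctahedral groups).**
Let `n ≥ 3`, `I` finite nonempty, `G = Hₙ^{(I)}` the fiber product of copies of `Hₙ`
over the total sign `χ`, and `H ≤ G`. If `H·M(G) = G` and the projection of `H` to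
each coordinate is all of `Hₙ`, then `H = G`. -/
theorem eq_top_of_sup_melnikov_fiberProd (n : ℕ) (hn : 3 ≤ n) (I : Type*) [Finite I]
    [Nonempty I] (H : Subgroup ↥(fiberProd n I))
    (h1 : H ⊔ melnikov ↥(fiberProd n I) = ⊤)
    (h2 : ∀ i : I,
      H.map ((Pi.evalMonoidHom (fun _ : I => Hyp n) i).comp (fiberProd n I).subtype) = ⊤) :
    H = ⊤ := by
  exact auxMain n hn (Nat.card I) I inferInstance inferInstance le_rfl H h1 h2
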